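/- Let A be a semi-prime, regular, commutative complex Banach algebra and let T be a multiplier on A (a map T : A → A with u(Tv) = (Tu)v for all u, v ∈ A). Then the descent spectrum of T coincides with its essential descent spectrum: σ_desc(T) = σ_desc^e(T). -/

import Mathlib

noncomputable section

variable {X : Type*} [NormedAddCommGroup X] [NormedSpace ℂ X]

/-- `T - λ·I`. -/
def shiftOp (T : X →L[ℂ] X) (l : ℂ) : X →L[ℂ] X := T - l • (1 : X →L[ℂ] X)

/-- The descent spectrum: the set of `λ` such that no `q` satisfies
`R((T-λ)^q) = R((T-λ)^{q+1})`, i.e. the descent of `T - λ` is infinite. -/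
def descentSpectrum (T : X →L[ℂ] X) : Set ℂ :=
  {l | ∀ q : ℕ, LinearMap.range (((shiftOp T l) ^ q : X →L[ℂ] X) : X →ₗ[ℂ] X) ≠ LinearMap.range (((shiftOp T l) ^ (q + 1) : X →L[ℂ] X) : X →ₗ[ℂ] X)}

/-- The quotient space `R(S^n) / R(S^{n+1})`. -/
abbrev rangeQuot (S : X →L[ℂ] X) (n : ℕ) : Type _ :=
  ↥(LinearMap.range ((S ^ n : X →L[ℂ] X) : X →ₗ[ℂ] X)) ⧸
    (Submodule.comap (LinearMap.range ((S ^ n : X →L[ℂ] X) : X →ₗ[ℂ] X)).subtype (LinearMap.range ((S ^ (n + 1) : X →L[ℂ] X) : X →ₗ[ℂ] X)))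

/-- The essential descent spectrum: the set of `λ` such that `c_n(T-λ) =
dim R((T-λ)^n)/R((T-λ)^{n+1})` is infinite for every `n`, i.e. `d_e(T-λ) = ∞`. -/
def essDescentSpectrum (T : X →L[ℂ] X) : Set ℂ :=
  {l | ∀ n : ℕ, ¬ FiniteDimensional ℂ (rangeQuot (shiftOp T l) n)}

/- ### Auxiliary material for the proof. -/

set_option linter.unusedSectionVars false
set_option maxHeartbeats 1000000

open WeakDual
open scoped ENNReal NNReal

/-- If the `n`-th range quotient is finite dimensional, so is the `(n+1)`-st: the operator
induces a surjection `R(S^n)/R(S^{n+1}) → R(S^{n+1})/R(S^{n+2})`. -/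
lemma rq_step (S : X →L[ℂ] X) (n : ℕ) (h : FiniteDimensional ℂ (rangeQuot S n)) :
    FiniteDimensional ℂ (rangeQuot S (n + 1)) := by
  haveI := h
  have hmap : ∀ x : X, x ∈ LinearMap.range (S ^ n).toLinearMap → S x ∈ LinearMap.range (S ^ (n + 1)).toLinearMap := by
    rintro x ⟨y, rfl⟩
    exact ⟨y, by rw [ContinuousLinearMap.coe_coe, pow_succ', ContinuousLinearMap.mul_apply]; rfl⟩
  let f : ↥(LinearMap.range (S ^ n).toLinearMap) →ₗ[ℂ] rangeQuot S (n + 1) :=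
    { toFun := fun x => Submodule.Quotient.mk ⟨S x.1, hmap x.1 x.2⟩
      map_add' := fun x y => by
        rw [← Submodule.Quotient.mk_add]
        exact congrArg _ (Subtype.ext (by simp))
      map_smul' := fun c x => by
        simp only [RingHom.id_apply]
        rw [← Submodule.Quotient.mk_smul]
        exact congrArg _ (Subtype.ext (by simp)) }
  have hle : Submodule.comap (LinearMap.range (S ^ n).toLinearMap).subtype (LinearMap.range (S ^ (n + 1)).toLinearMap)
      ≤ LinearMap.ker f := by
    rintro ⟨x, hx⟩ hmem
    simp only [Submodule.mem_comap] at hmem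
    obtain ⟨y, hy⟩ := hmem
    rw [LinearMap.mem_ker]
    show Submodule.Quotient.mk _ = 0
    rw [Submodule.Quotient.mk_eq_zero]
    simp only [Submodule.mem_comap]
    exact ⟨y, by
      simp only [Submodule.coe_subtype, ContinuousLinearMap.coe_coe] at hy ⊢
      rw [pow_succ', ContinuousLinearMap.mul_apply, hy]⟩
  let g := Submodule.liftQ _ f hle
  have hg : Function.Surjective g := by
    intro z
    obtain ⟨⟨x, hx⟩, rfl⟩ := Submodule.Quotient.mk_surjective _ z
    obtain ⟨y, hy⟩ := hx
    refine ⟨Submodule.Quotient.mk ⟨(S ^ n) y, ⟨y, rfl⟩⟩, ?_⟩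
    rw [Submodule.liftQ_apply]
    show Submodule.Quotient.mk _ = Submodule.Quotient.mk _
    apply congrArg
    apply Subtype.ext
    show S ((S ^ n) y) = x
    rw [← ContinuousLinearMap.mul_apply, ← pow_succ']; exact hy
  exact Module.Finite.of_surjective g hg

section algA
variable {A : Type*} [NormedCommRing A] [NormedAlgebra ℂ A] [CompleteSpace A]

/-- A semi-prime commutative ring is reduced. -/
lemma aux_reduced (hsp : ∀ J : Ideal A, J * J = ⊥ → J = ⊥) (x : A) (hx : x * x = 0) : x = 0 := by
  have h : Ideal.span {x} * Ideal.span {x} = ⊥ := by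
    rw [Ideal.span_singleton_mul_span_singleton, hx, Ideal.span_singleton_eq_bot]
  have h2 := hsp _ h
  have hm : x ∈ Ideal.span {x} := Ideal.mem_span_singleton_self x
  rw [h2] at hm
  simpa using hm

lemma aux_pow_eq_zero (hred : ∀ x : A, x * x = 0 → x = 0) :
    ∀ (k : ℕ) (z : A), z ^ (k + 1) = 0 → z = 0 := by
  intro k
  induction k with
  | zero => intro z h; simpa using h
  | succ k ih =>
    intro z h
    refine ih z (hred _ ?_)
    have h2 : z ^ (k + 1) * z ^ (k + 1) = z ^ (k + 1 + 1) * z ^ k := by ring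
    rw [h2, h, zero_mul]

lemma char_norm_le (ψ : characterSpace ℂ A) (a : A) : ‖ψ a‖ ≤ ‖a‖ * ‖(1 : A)‖ :=
  spectrum.norm_le_norm_mul_of_mem (WeakDual.CharacterSpace.apply_mem_spectrum ψ a)

/-- The annihilator ideal of `b`. -/
def annIdeal (b : A) : Ideal A where
  carrier := {x | b * x = 0}
  add_mem' := by
    intro x y hx hy
    simp only [Set.mem_setOf_eq] at *
    rw [mul_add, hx, hy, add_zero]
  zero_mem' := by simp
  smul_mem' := by
    intro c x hx
    simp only [Set.mem_setOf_eq, smul_eq_mul] at *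
    rw [mul_comm c x, ← mul_assoc, hx, zero_mul]

/-- The ideal `bA + Ann(b)`. -/
def JbI (b : A) : Ideal A := Ideal.span {b} ⊔ annIdeal b

lemma mem_JbI {b x : A} : x ∈ JbI b ↔ ∃ t r : A, b * r = 0 ∧ b * t + r = x := by
  constructor
  · intro h
    obtain ⟨y, hy, z, hz, hyz⟩ := Submodule.mem_sup.mp h
    obtain ⟨t, ht⟩ := Ideal.mem_span_singleton'.mp hy
    exact ⟨t, z, hz, by rw [mul_comm b t, ht, hyz]⟩
  · rintro ⟨t, r, hr, rfl⟩
    exact Submodule.mem_sup.mpr ⟨b * t, Ideal.mem_span_singleton'.mpr ⟨t, mul_comm t b⟩, r, hr, rfl⟩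

lemma b_mem_JbI (b : A) : b ∈ JbI b :=
  mem_JbI.mpr ⟨1, 0, by rw [mul_zero], by rw [mul_one, add_zero]⟩

/-- If the multiplication operator by `b^{k+1}` has range quotient of finite dimension,
then `bA + Ann(b)` has finite codimension in `A`. -/
lemma findim_quot (b : A) (S : A →L[ℂ] A) (hS : ∀ (m : ℕ) (x : A), (S ^ m) x = b ^ m * x)
    (hred : ∀ x : A, x * x = 0 → x = 0)
    (k : ℕ) (h : FiniteDimensional ℂ (rangeQuot S (k + 1))) :
    FiniteDimensional ℂ (A ⧸ (JbI b).restrictScalars ℂ) := by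
  haveI := h
  have hredk : ∀ z : A, b ^ (k + 1) * z = 0 → b * z = 0 := by
    intro z hz
    refine aux_pow_eq_zero hred k (b * z) ?_
    have : (b * z) ^ (k + 1) = b ^ (k + 1) * z * z ^ k := by ring
    rw [this, hz, zero_mul]
  let h₀ : A →ₗ[ℂ] rangeQuot S (k + 1) :=
    { toFun := fun x => Submodule.Quotient.mk
        ⟨(S ^ (k + 1)) x, LinearMap.mem_range_self _ x⟩
      map_add' := fun x y => by
        rw [← Submodule.Quotient.mk_add]
        exact congrArg _ (Subtype.ext (by simp))
      map_smul' := fun c x => by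
        simp only [RingHom.id_apply]
        rw [← Submodule.Quotient.mk_smul]
        exact congrArg _ (Subtype.ext (by simp)) }
  have hker : ∀ x : A, x ∈ LinearMap.ker h₀ ↔ x ∈ (JbI b).restrictScalars ℂ := by
    intro x
    rw [LinearMap.mem_ker]
    have hstep : h₀ x = 0 ↔ (S ^ (k + 1)) x ∈ LinearMap.range (S ^ (k + 1 + 1)).toLinearMap := by
      show Submodule.Quotient.mk _ = 0 ↔ _
      rw [Submodule.Quotient.mk_eq_zero]
      exact Iff.rfl
    rw [hstep, Submodule.restrictScalars_mem]
    constructor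
    · rintro ⟨y, hy⟩
      rw [ContinuousLinearMap.coe_coe, hS, hS] at hy
      have h1 : b ^ (k + 1) * (x - b * y) = 0 := by
        rw [mul_sub, ← hy]; ring
      have h2 : b * (x - b * y) = 0 := hredk _ h1
      exact mem_JbI.mpr ⟨y, x - b * y, h2, by ring⟩
    · intro hx
      obtain ⟨t, r, hr, htr⟩ := mem_JbI.mp hx
      refine ⟨t, ?_⟩
      rw [ContinuousLinearMap.coe_coe, hS, hS, ← htr]
      have : b ^ (k + 1) * r = b ^ k * (b * r) := by ring
      rw [mul_add, this, hr, mul_zero, add_zero]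
      ring
  have hle : (JbI b).restrictScalars ℂ ≤ LinearMap.ker h₀ := fun x hx => (hker x).mpr hx
  let g := Submodule.liftQ _ h₀ hle
  have hginj : Function.Injective g := by
    rw [← LinearMap.ker_eq_bot]
    rw [Submodule.ker_liftQ_eq_bot]
    exact fun x hx => (hker x).mp hx
  exact FiniteDimensional.of_injective g hginj

/-- **Core analytic lemma.** In a semi-prime regular commutative complex Banach algebra,
if the ideal `bA + Ann(b)` has finite codimension, then it is all of `A`. -/
theorem key_surj (hsp : ∀ J : Ideal A, J * J = ⊥ → J = ⊥)
    (hreg : ∀ F : Set (WeakDual.characterSpace ℂ A), IsClosed F →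
      ∀ φ : WeakDual.characterSpace ℂ A, φ ∉ F →
        ∃ a : A, (∀ ψ ∈ F, ψ a = 0) ∧ φ a = 1)
    (b : A)
    (hfin : FiniteDimensional ℂ (A ⧸ (JbI b).restrictScalars ℂ)) :
    ∃ t r : A, b * r = 0 ∧ b * t + r = 1 := by
  by_cases htop : JbI b = ⊤
  · exact mem_JbI.mp (htop ▸ Submodule.mem_top)
  exfalso
  have hred : ∀ x : A, x * x = 0 → x = 0 := aux_reduced hsp
  set Jb : Submodule ℂ A := (JbI b).restrictScalars ℂ with hJbdef
  obtain ⟨V, hV⟩ := Submodule.exists_isCompl Jb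
  haveI hfV : FiniteDimensional ℂ V :=
    (Submodule.quotientEquivOfIsCompl Jb V hV).finiteDimensional
  set Lb : A →L[ℂ] A := ContinuousLinearMap.mul ℂ A b with hLbdef
  have hLb : ∀ x : A, Lb x = b * x := fun x => rfl
  set Kb : Submodule ℂ A := LinearMap.ker Lb.toLinearMap with hKbdef
  have hKb : ∀ x : A, x ∈ Kb ↔ b * x = 0 := fun x => by
    simp [hKbdef, LinearMap.mem_ker, hLb]
  set G : ((A × ↥Kb) × ↥V) →L[ℂ] A := (Lb.coprod Kb.subtypeL).coprod V.subtypeL with hGdef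
  have hGapp : ∀ (t : A) (r : ↥Kb) (v : ↥V), G ((t, r), v) = b * t + ↑r + ↑v := by
    intro t r v
    simp [hGdef, ContinuousLinearMap.coprod_apply, hLb]
  have hJbmem : ∀ x : A, x ∈ Jb ↔ ∃ t r : A, b * r = 0 ∧ b * t + r = x := fun x => mem_JbI
  have hGsurj : Function.Surjective G := by
    intro a
    have ha : a ∈ Jb ⊔ V := by rw [hV.sup_eq_top]; exact Submodule.mem_top
    obtain ⟨j, hj, v, hv, hjv⟩ := Submodule.mem_sup.mp ha
    obtain ⟨t, r, hr, htr⟩ := (hJbmem j).mp hj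
    refine ⟨((t, ⟨r, (hKb r).mpr hr⟩), ⟨v, hv⟩), ?_⟩
    rw [hGapp]
    simp only
    rw [htr, hjv]
  obtain ⟨C, hC0, hC⟩ := ContinuousLinearMap.exists_preimage_norm_le G hGsurj
  have hEST : ∀ x κ : A, b * κ = 0 →
      ∃ t κ' : A, b * κ' = 0 ∧ x = t + κ' ∧ ‖t‖ ≤ C * ‖b * x - κ‖ := by
    intro x κ hκ
    obtain ⟨⟨⟨t, r⟩, v⟩, hfeq, hnorm⟩ := hC (b * x - κ)
    rw [hGapp] at hfeq
    have hmemJ : b * t + ↑r + ↑v ∈ Jb := by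
      rw [hfeq]
      exact Submodule.sub_mem _ ((hJbmem _).mpr ⟨x, 0, mul_zero b, by ring⟩)
        ((hJbmem _).mpr ⟨0, κ, hκ, by ring⟩)
    have hvJ : (↑v : A) ∈ Jb := by
      have : (↑v : A) = (b * t + ↑r + ↑v) - (b * t + ↑r) := by ring
      rw [this]
      exact Submodule.sub_mem _ hmemJ ((hJbmem _).mpr ⟨t, ↑r, (hKb _).mp r.2, rfl⟩)
    have hv0 : (↑v : A) = 0 := Submodule.disjoint_def.mp hV.disjoint _ hvJ v.2
    rw [hv0, add_zero] at hfeq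
    have h1 : b * (x - t) = ↑r + κ := by
      have : b * x - κ - b * t = (↑r : A) := by rw [← hfeq]; ring
      rw [mul_sub, ← this]; ring
    have h2 : b * (b * (x - t)) = 0 := by
      rw [h1, mul_add, (hKb _).mp r.2, hκ, add_zero]
    have h3 : b * (x - t) = 0 := by
      refine hred _ ?_
      have : b * (x - t) * (b * (x - t)) = b * (b * (x - t)) * (x - t) := by ring
      rw [this, h2, zero_mul]
    refine ⟨t, x - t, h3, by ring, ?_⟩
    calc ‖t‖ ≤ ‖(t, r)‖ := norm_fst_le (t, r)
      _ ≤ ‖((t, r), v)‖ := norm_fst_le ((t, r), v)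
      _ ≤ C * ‖b * x - κ‖ := hnorm
  have hITER : ∀ (m : ℕ) (x : A), ∃ t κ : A, b * κ = 0 ∧ x = t + κ ∧
      ‖t‖ ≤ C ^ m * ‖b ^ m * x‖ := by
    intro m
    induction m with
    | zero =>
      intro x
      exact ⟨x, 0, mul_zero b, by ring, by simp⟩
    | succ m ih =>
      intro x
      obtain ⟨t, κ, hκ, heq, hle⟩ := ih (b * x)
      obtain ⟨t', κ', hκ', heq', hle'⟩ := hEST x κ hκ
      refine ⟨t', κ', hκ', heq', ?_⟩
      have hbxκ : b * x - κ = t := by rw [heq]; ring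
      rw [hbxκ] at hle'
      calc ‖t'‖ ≤ C * ‖t‖ := hle'
        _ ≤ C * (C ^ m * ‖b ^ m * (b * x)‖) :=
            mul_le_mul_of_nonneg_left hle (le_of_lt hC0)
        _ = C ^ (m + 1) * ‖b ^ (m + 1) * x‖ := by
            rw [show b ^ m * (b * x) = b ^ (m + 1) * x by ring]
            ring
  obtain ⟨Mx, hMxmax, hMxle⟩ := Ideal.exists_le_maximal _ htop
  haveI := hMxmax
  set φ := Mx.toCharacterSpace with hφdef
  have hφ0 : ∀ x ∈ JbI b, φ x = 0 := fun x hx =>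
    Mx.toCharacterSpace_apply_eq_zero_of_mem (hMxle hx)
  have hφb : φ b = 0 := hφ0 b (b_mem_JbI b)
  set δ : ℝ := (2 * C)⁻¹ with hδdef
  have hδ0 : 0 < δ := by positivity
  set F : Set (characterSpace ℂ A) := {ψ | δ ≤ ‖ψ b‖} with hFdef
  have hFc : IsClosed F := by
    have hcont : Continuous fun ψ : characterSpace ℂ A => ‖ψ b‖ :=
      ((WeakDual.eval_continuous b).comp continuous_subtype_val).norm
    exact isClosed_Ici.preimage hcont
  have hφF : φ ∉ F := by
    simp only [hFdef, Set.mem_setOf_eq, hφb, norm_zero, not_le]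
    exact hδ0
  obtain ⟨u, hu0, hu1⟩ := hreg F hFc φ hφF
  obtain ⟨s, hs⟩ := pow_unbounded_of_one_lt (‖u‖ * ‖(1 : A)‖) (one_lt_two (α := ℝ))
  set w : A := u * b ^ s with hwdef
  set ρ : ℝ := ‖u‖ * ‖(1 : A)‖ * δ ^ s with hρdef
  have hρ0 : 0 ≤ ρ := by positivity
  have hspec : ∀ ψ : characterSpace ℂ A, ‖ψ w‖ ≤ ρ := by
    intro ψ
    by_cases hmem : ψ ∈ F
    · have : ψ w = 0 := by
        rw [hwdef, map_mul, hu0 ψ hmem, zero_mul]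
      rw [this, norm_zero]; exact hρ0
    · have hlt : ‖ψ b‖ < δ := by
        simpa [hFdef] using hmem
      have h1 : ‖ψ w‖ = ‖ψ u‖ * ‖ψ b‖ ^ s := by
        rw [hwdef, map_mul, map_pow, norm_mul, norm_pow]
      rw [h1, hρdef]
      exact mul_le_mul (char_norm_le ψ u)
        (pow_le_pow_left₀ (norm_nonneg _) (le_of_lt hlt) s)
        (by positivity) (by positivity)
  have hsrad : spectralRadius ℂ w ≤ ENNReal.ofReal ρ := by
    rw [spectralRadius]
    refine iSup₂_le fun k hk => ?_
    obtain ⟨ψ, hψ⟩ := WeakDual.CharacterSpace.mem_spectrum_iff_exists.mp hk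
    rw [← hψ]
    rw [← enorm_eq_nnnorm, ← ofReal_norm]
    exact ENNReal.ofReal_le_ofReal (hspec ψ)
  set θ : ℝ := C ^ s with hθdef
  have hθ0 : 0 < θ := by positivity
  have hρθ : ρ * θ < 1 := by
    have hC0' : (C : ℝ) ≠ 0 := ne_of_gt hC0
    have hδC : δ * C = 1 / 2 := by
      rw [hδdef]; field_simp
    have hh : ρ * θ = ‖u‖ * ‖(1 : A)‖ * (δ * C) ^ s := by
      rw [hρdef, hθdef, mul_pow]; ring
    rw [hh, hδC]
    have h2s : (0 : ℝ) < 2 ^ s := by positivity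
    rw [show ((1 : ℝ) / 2) ^ s = 1 / 2 ^ s by rw [div_pow, one_pow]]
    rw [mul_one_div, div_lt_one h2s]
    exact hs
  have hρinv : ρ < 1 / θ := (lt_div_iff₀ hθ0).mpr (by linarith)
  set c₀ : ℝ := (ρ + 1 / θ) / 2 with hc₀def
  have hρc₀ : ρ < c₀ := by rw [hc₀def]; linarith
  have hc₀inv : c₀ < 1 / θ := by rw [hc₀def]; linarith
  have hc₀0 : 0 < c₀ := by
    have : 0 < 1 / θ := by positivity
    rw [hc₀def]; linarith
  have hθc₀ : θ * c₀ < 1 := by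
    have := (lt_div_iff₀ hθ0).mp hc₀inv
    linarith [this]
  have h1 : ∀ᶠ m : ℕ in Filter.atTop,
      (‖w ^ m‖₊ : ℝ≥0∞) ^ (1 / m : ℝ) < ENNReal.ofReal c₀ := by
    refine (spectrum.pow_nnnorm_pow_one_div_tendsto_nhds_spectralRadius w).eventually_lt_const ?_
    calc spectralRadius ℂ w ≤ ENNReal.ofReal ρ := hsrad
      _ < ENNReal.ofReal c₀ := (ENNReal.ofReal_lt_ofReal_iff hc₀0).mpr hρc₀
  set ε : ℝ := (‖(1 : A)‖ + 1)⁻¹ with hεdef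
  have hε0 : 0 < ε := by positivity
  have h2 : Filter.Tendsto (fun m : ℕ => (θ * c₀) ^ m) Filter.atTop (nhds 0) :=
    tendsto_pow_atTop_nhds_zero_of_lt_one (by positivity) hθc₀
  have h3 : ∀ᶠ m : ℕ in Filter.atTop, (θ * c₀) ^ m < ε := h2.eventually_lt_const hε0
  obtain ⟨m, hm1, hmlt, hmε⟩ := ((Filter.eventually_ge_atTop 1).and (h1.and h3)).exists
  have hmne : ((m : ℝ)) ≠ 0 := Nat.cast_ne_zero.mpr (by omega)
  have hwm : ‖w ^ m‖ < c₀ ^ m := by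
    have h4 : ((‖w ^ m‖₊ : ℝ≥0∞) ^ (1 / m : ℝ)) ^ (m : ℝ) < (ENNReal.ofReal c₀) ^ (m : ℝ) :=
      ENNReal.rpow_lt_rpow hmlt (by positivity)
    rw [← ENNReal.rpow_mul, one_div, inv_mul_cancel₀ hmne, ENNReal.rpow_one] at h4
    rw [ENNReal.rpow_natCast, ← ENNReal.ofReal_pow hc₀0.le] at h4
    rw [← enorm_eq_nnnorm, ← ofReal_norm] at h4
    exact (ENNReal.ofReal_lt_ofReal_iff (by positivity)).mp h4
  obtain ⟨t, κ, hκ, hteq, htle⟩ := hITER (s * m) (u ^ m)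
  have hbw : b ^ (s * m) * u ^ m = w ^ m := by
    rw [hwdef, mul_pow, ← pow_mul]; ring
  rw [hbw] at htle
  have hCsm : C ^ (s * m) = θ ^ m := by rw [hθdef, ← pow_mul]
  rw [hCsm] at htle
  have hκJ : φ κ = 0 := hφ0 κ (mem_JbI.mpr ⟨0, κ, hκ, by ring⟩)
  have hφum : φ (u ^ m) = 1 := by rw [map_pow, hu1, one_pow]
  have hφt : (1 : ℂ) = φ t := by
    rw [← hφum, hteq, map_add, hκJ, add_zero]
  have hnorm1 : (1 : ℝ) ≤ ‖t‖ * ‖(1 : A)‖ := by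
    calc (1 : ℝ) = ‖(1 : ℂ)‖ := by simp
      _ = ‖φ t‖ := by rw [← hφt]
      _ ≤ ‖t‖ * ‖(1 : A)‖ := char_norm_le φ t
  have hlast : ‖t‖ < ε := by
    calc ‖t‖ ≤ θ ^ m * ‖w ^ m‖ := htle
      _ < θ ^ m * c₀ ^ m := mul_lt_mul_of_pos_left hwm (by positivity)
      _ = (θ * c₀) ^ m := by rw [mul_pow]
      _ < ε := hmε
  have hfinal : ‖t‖ * ‖(1 : A)‖ < ε * (‖(1 : A)‖ + 1) := by
    calc ‖t‖ * ‖(1 : A)‖ ≤ ‖t‖ * (‖(1 : A)‖ + 1) :=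
          mul_le_mul_of_nonneg_left (by linarith [norm_nonneg (1 : A)]) (norm_nonneg t)
      _ < ε * (‖(1 : A)‖ + 1) :=
          mul_lt_mul_of_pos_right hlast (by positivity)
  rw [hεdef, inv_mul_cancel₀ (show ‖(1 : A)‖ + 1 ≠ 0 by positivity)] at hfinal
  linarith

end algA

/-- Let `A` be a semi-prime, regular, commutative complex Banach
algebra (semi-prime: the only ideal `J` with `J² = 0` is `{0}`; regular: for every
closed subset `F` of the character space and every character `φ ∉ F` there is `a ∈ A`
whose Gelfand transform vanishes on `F` and equals `1` at `φ`). If `T` is a multiplier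
on `A`, i.e. `u·(T v) = (T u)·v` for all `u, v`, then `σ_desc(T) = σ_desc^e(T)`. -/
theorem multiplier_descentSpectrum_eq_essDescentSpectrum
    {A : Type*} [NormedCommRing A] [NormedAlgebra ℂ A] [CompleteSpace A]
    (hsemiprime : ∀ J : Ideal A, J * J = ⊥ → J = ⊥)
    (hregular : ∀ F : Set (WeakDual.characterSpace ℂ A), IsClosed F →
      ∀ φ : WeakDual.characterSpace ℂ A, φ ∉ F →
        ∃ a : A, (∀ ψ ∈ F, ψ a = 0) ∧ φ a = 1)
    (T : A →L[ℂ] A) (hT : ∀ u v : A, u * T v = T u * v) :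
    descentSpectrum T = essDescentSpectrum T := by
  have hred : ∀ x : A, x * x = 0 → x = 0 := aux_reduced hsemiprime
  have hTone : ∀ v : A, T v = T 1 * v := fun v => by
    have := hT 1 v; rwa [one_mul] at this
  ext l
  simp only [descentSpectrum, essDescentSpectrum, Set.mem_setOf_eq]
  set S := shiftOp T l with hSdef
  set b : A := T 1 - l • (1 : A) with hbdef
  have hS1 : ∀ x : A, S x = b * x := by
    intro x
    rw [hSdef, shiftOp, ContinuousLinearMap.sub_apply, ContinuousLinearMap.smul_apply,
      ContinuousLinearMap.one_apply, hbdef, sub_mul, smul_mul_assoc, one_mul, hTone x]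
  have hSpow : ∀ (m : ℕ) (x : A), (S ^ m) x = b ^ m * x := by
    intro m
    induction m with
    | zero => intro x; simp
    | succ m ih =>
      intro x
      rw [pow_succ', ContinuousLinearMap.mul_apply, ih, hS1, ← mul_assoc, ← pow_succ']
  constructor
  · intro hdesc n hfin
    have h1 : FiniteDimensional ℂ (rangeQuot S (n + 1)) := rq_step S n hfin
    have h2 : FiniteDimensional ℂ (A ⧸ (JbI b).restrictScalars ℂ) :=
      findim_quot b S hSpow hred n h1
    obtain ⟨t, r, hr, htr⟩ := key_surj hsemiprime hregular b h2
    refine hdesc 1 (le_antisymm ?_ ?_)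
    · rintro x ⟨y, rfl⟩
      refine ⟨t * y, ?_⟩
      simp only [ContinuousLinearMap.coe_coe]
      rw [hSpow, hSpow]
      have hmul : b * y = (b * t + r) * (b * y) := by rw [htr, one_mul]
      calc b ^ 2 * (t * y) = (b * t) * (b * y) := by ring
        _ = (b * t + r) * (b * y) - r * (b * y) := by ring
        _ = b * y - 0 := by
            rw [← hmul, show r * (b * y) = (b * r) * y by ring, hr, zero_mul]
        _ = b ^ 1 * y := by ring
    · rintro x ⟨y, rfl⟩
      exact ⟨b * y, by simp only [ContinuousLinearMap.coe_coe]; rw [hSpow, hSpow]; ring⟩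
  · intro hess q hq
    refine hess q ?_
    have htop : Submodule.comap (LinearMap.range (S ^ q).toLinearMap).subtype
        (LinearMap.range (S ^ (q + 1)).toLinearMap) = ⊤ := by
      rw [Submodule.comap_subtype_eq_top, hq]
    haveI : Subsingleton (rangeQuot S q) :=
      Submodule.Quotient.subsingleton_iff.mpr htop
    have hsurj : Function.Surjective (0 : ℂ →ₗ[ℂ] rangeQuot S q) :=
      fun y => ⟨0, Subsingleton.elim _ _⟩
    exact Module.Finite.of_surjective _ hsurj
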